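/- Let $0 < \beta_2 \leq 1$, $0 \leq \beta_1 < \beta_2$, $\epsilon > 0$, and let $(a_n)_{n \geq 1}$ be a real sequence. Define $b_n = \sum_{j=1}^n \beta_2^{n-j} a_j^2$ and $c_n = \sum_{j=1}^n \beta_1^{n-j} a_j$. Then for all $n \geq 1$, $\sum_{j=1}^n \frac{c_j^2}{\epsilon + b_j} \leq \frac{1}{(1-\beta_1)(1-\beta_1/\beta_2)}\left(\ln\left(1 + \frac{b_n}{\epsilon}\right) - n \ln(\beta_2)\right)$. -/

import Mathlib

open Finset

private lemma geom_range_le {r : ℝ} (h0 : 0 ≤ r) (h1 : r < 1) (n : ℕ) :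
    ∑ i ∈ range n, r ^ i ≤ 1 / (1 - r) := by
  have h : 0 < 1 - r := by linarith
  rw [le_div_iff₀ h]
  have := geom_sum_mul r n
  nlinarith [pow_nonneg h0 n]

private lemma geom_Icc_le {r : ℝ} (h0 : 0 ≤ r) (h1 : r < 1) (m n : ℕ) :
    ∑ j ∈ Icc m n, r ^ (j - m) ≤ 1 / (1 - r) := by
  rw [← Finset.Ico_add_one_right_eq_Icc, Finset.sum_Ico_eq_sum_range]
  have e : ∀ i ∈ range (n + 1 - m), r ^ (m + i - m) = r ^ i := by
    intro i _; congr 1; omega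
  rw [Finset.sum_congr rfl e]
  exact geom_range_le h0 h1 _

private lemma geom_Icc_rev_le {r : ℝ} (h0 : 0 ≤ r) (h1 : r < 1) (j : ℕ) :
    ∑ l ∈ Icc 1 j, r ^ (j - l) ≤ 1 / (1 - r) := by
  rw [← Finset.Ico_add_one_right_eq_Icc, Finset.sum_Ico_eq_sum_range]
  have e : ∀ i ∈ range (j + 1 - 1), r ^ (j - (1 + i)) = (fun k => r ^ k) (j + 1 - 1 - 1 - i) := by
    intro i hi; simp only; congr 1; simp at hi; omega
  rw [Finset.sum_congr rfl e, Finset.sum_range_reflect (fun k => r ^ k)]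
  exact geom_range_le h0 h1 _

private lemma per_step {ε b aa β₂ : ℝ} (hε : 0 < ε) (hb : 0 ≤ b) (hβ₂0 : 0 < β₂)
    (hβ₂1 : β₂ ≤ 1) :
    aa ^ 2 / (ε + (β₂ * b + aa ^ 2)) ≤
      Real.log (ε + (β₂ * b + aa ^ 2)) - Real.log (ε + b) - Real.log β₂ := by
  set s := ε + (β₂ * b + aa ^ 2) with hs
  set t := ε + β₂ * b with ht
  have htpos : 0 < t := by positivity
  have hspos : 0 < s := by nlinarith [sq_nonneg aa]
  have hts : t ≤ s := by nlinarith [sq_nonneg aa]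
  have h1 : aa ^ 2 / s = 1 - t / s := by field_simp; ring
  have h2 : Real.log (t / s) ≤ t / s - 1 := Real.log_le_sub_one_of_pos (by positivity)
  rw [Real.log_div htpos.ne' hspos.ne'] at h2
  have h3 : Real.log (β₂ * (ε + b)) ≤ Real.log t := by
    apply Real.log_le_log (by positivity)
    nlinarith
  rw [Real.log_mul hβ₂0.ne' (by positivity)] at h3
  rw [h1]; linarith

/-- Sum of ratios of the square of a decayed sum and a decayed sum of squares. -/
theorem sum_ratio_momentum_bound (β₁ β₂ ε : ℝ) (hβ₂0 : 0 < β₂) (hβ₂1 : β₂ ≤ 1)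
    (hβ₁0 : 0 ≤ β₁) (hβ₁2 : β₁ < β₂) (hε : 0 < ε)
    (a : ℕ → ℝ)
    (b : ℕ → ℝ) (hb : ∀ n, b n = ∑ j ∈ Finset.Icc 1 n, β₂ ^ (n - j) * a j ^ 2)
    (c : ℕ → ℝ) (hc : ∀ n, c n = ∑ j ∈ Finset.Icc 1 n, β₁ ^ (n - j) * a j)
    (n : ℕ) (hn : 1 ≤ n) :
    ∑ j ∈ Finset.Icc 1 n, c j ^ 2 / (ε + b j)
      ≤ 1 / ((1 - β₁) * (1 - β₁ / β₂)) *
        (Real.log (1 + b n / ε) - n * Real.log β₂) := by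
  have hβ₁1 : β₁ < 1 := lt_of_lt_of_le hβ₁2 hβ₂1
  set r : ℝ := β₁ / β₂ with hr
  have hr0 : 0 ≤ r := div_nonneg hβ₁0 hβ₂0.le
  have hr1 : r < 1 := (div_lt_one hβ₂0).mpr hβ₁2
  have hbnn : ∀ m, 0 ≤ b m := by
    intro m; rw [hb m]
    exact Finset.sum_nonneg fun j _ => by positivity
  have hεb : ∀ m, 0 < ε + b m := fun m => by linarith [hbnn m]
  have hrec : ∀ m, b (m + 1) = β₂ * b m + a (m + 1) ^ 2 := by
    intro m
    rw [hb (m + 1), hb m, Finset.sum_Icc_succ_top (by omega), Finset.mul_sum]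
    congr 1
    · apply Finset.sum_congr rfl
      intro j hj
      simp only [Finset.mem_Icc] at hj
      rw [← mul_assoc, ← pow_succ']
      congr 2
      omega
    · simp
  have hmono : ∀ l j, l ≤ j → β₂ ^ (j - l) * (ε + b l) ≤ ε + b j := by
    intro l j hlj
    induction j with
    | zero => interval_cases l; simp
    | succ m ih =>
      rcases Nat.lt_or_ge m l with h | h
      · have hl : l = m + 1 := by omega
        subst hl; simp
      · have hs : m + 1 - l = (m - l) + 1 := by omega
        rw [hs, pow_succ]
        have h1 : β₂ ^ (m - l) * (ε + b l) ≤ ε + b m := ih h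
        have h2 : β₂ * (ε + b m) ≤ ε + b (m + 1) := by
          rw [hrec m]; nlinarith [sq_nonneg (a (m + 1))]
        calc β₂ ^ (m - l) * β₂ * (ε + b l) = β₂ * (β₂ ^ (m - l) * (ε + b l)) := by ring
          _ ≤ β₂ * (ε + b m) := mul_le_mul_of_nonneg_left h1 hβ₂0.le
          _ ≤ ε + b (m + 1) := h2
  have hbase : ∀ m : ℕ, ∑ j ∈ Finset.Icc 1 m, a j ^ 2 / (ε + b j)
      ≤ Real.log (ε + b m) - Real.log ε - m * Real.log β₂ := by
    intro m
    induction m with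
    | zero => simp [hb 0]
    | succ k ih =>
      rw [Finset.sum_Icc_succ_top (by omega)]
      have hstep : a (k + 1) ^ 2 / (ε + b (k + 1)) ≤
          Real.log (ε + b (k + 1)) - Real.log (ε + b k) - Real.log β₂ := by
        have h := per_step (aa := a (k + 1)) (b := b k) hε (hbnn k) hβ₂0 hβ₂1
        rw [← hrec k] at h
        exact h
      push_cast
      linarith
  have hjensen : ∀ j : ℕ,
      c j ^ 2 ≤ (1 / (1 - β₁)) * ∑ l ∈ Finset.Icc 1 j, β₁ ^ (j - l) * a l ^ 2 := by
    intro j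
    rw [hc j]
    have hcs := Finset.sum_mul_sq_le_sq_mul_sq (Finset.Icc 1 j)
      (fun l => Real.sqrt (β₁ ^ (j - l))) (fun l => Real.sqrt (β₁ ^ (j - l)) * a l)
    have e1 : ∀ l ∈ Finset.Icc 1 j,
        Real.sqrt (β₁ ^ (j - l)) * (Real.sqrt (β₁ ^ (j - l)) * a l) = β₁ ^ (j - l) * a l := by
      intro l _
      rw [← mul_assoc, Real.mul_self_sqrt (by positivity)]
    have e2 : ∀ l ∈ Finset.Icc 1 j, Real.sqrt (β₁ ^ (j - l)) ^ 2 = β₁ ^ (j - l) := by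
      intro l _; exact Real.sq_sqrt (by positivity)
    have e3 : ∀ l ∈ Finset.Icc 1 j,
        (Real.sqrt (β₁ ^ (j - l)) * a l) ^ 2 = β₁ ^ (j - l) * a l ^ 2 := by
      intro l _
      rw [mul_pow, Real.sq_sqrt (by positivity)]
    rw [Finset.sum_congr rfl e1, Finset.sum_congr rfl e2, Finset.sum_congr rfl e3] at hcs
    have hgeom : ∑ l ∈ Finset.Icc 1 j, β₁ ^ (j - l) ≤ 1 / (1 - β₁) :=
      geom_Icc_rev_le hβ₁0 hβ₁1 j
    have hsqnn : 0 ≤ ∑ l ∈ Finset.Icc 1 j, β₁ ^ (j - l) * a l ^ 2 :=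
      Finset.sum_nonneg fun l _ => by positivity
    calc (∑ l ∈ Finset.Icc 1 j, β₁ ^ (j - l) * a l) ^ 2
        ≤ (∑ l ∈ Finset.Icc 1 j, β₁ ^ (j - l)) *
            ∑ l ∈ Finset.Icc 1 j, β₁ ^ (j - l) * a l ^ 2 := hcs
      _ ≤ (1 / (1 - β₁)) * ∑ l ∈ Finset.Icc 1 j, β₁ ^ (j - l) * a l ^ 2 :=
          mul_le_mul_of_nonneg_right hgeom hsqnn
  have hperj : ∀ j ∈ Finset.Icc 1 n, c j ^ 2 / (ε + b j) ≤
      (1 / (1 - β₁)) * ∑ l ∈ Finset.Icc 1 j, r ^ (j - l) * (a l ^ 2 / (ε + b l)) := by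
    intro j _
    have h1 : c j ^ 2 / (ε + b j)
        ≤ ((1 / (1 - β₁)) * ∑ l ∈ Finset.Icc 1 j, β₁ ^ (j - l) * a l ^ 2) / (ε + b j) :=
      div_le_div_of_nonneg_right (hjensen j) (hεb j).le
    have h2 : ((1 / (1 - β₁)) * ∑ l ∈ Finset.Icc 1 j, β₁ ^ (j - l) * a l ^ 2) / (ε + b j)
        = (1 / (1 - β₁)) * ∑ l ∈ Finset.Icc 1 j, β₁ ^ (j - l) * a l ^ 2 / (ε + b j) := by
      rw [mul_div_assoc, Finset.sum_div]
    have h3 : ∀ l ∈ Finset.Icc 1 j, β₁ ^ (j - l) * a l ^ 2 / (ε + b j)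
        ≤ r ^ (j - l) * (a l ^ 2 / (ε + b l)) := by
      intro l hl
      simp only [Finset.mem_Icc] at hl
      have hd : β₂ ^ (j - l) * (ε + b l) ≤ ε + b j := hmono l j hl.2
      have hdd : 0 < β₂ ^ (j - l) * (ε + b l) := mul_pos (pow_pos hβ₂0 _) (hεb l)
      have : r ^ (j - l) * (a l ^ 2 / (ε + b l))
          = β₁ ^ (j - l) * a l ^ 2 / (β₂ ^ (j - l) * (ε + b l)) := by
        rw [hr, div_pow, div_mul_div_comm]
      rw [this]
      apply div_le_div_of_nonneg_left (by positivity) hdd hd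
    calc c j ^ 2 / (ε + b j)
        ≤ (1 / (1 - β₁)) * ∑ l ∈ Finset.Icc 1 j, β₁ ^ (j - l) * a l ^ 2 / (ε + b j) := by
          rw [← h2]; exact h1
      _ ≤ (1 / (1 - β₁)) * ∑ l ∈ Finset.Icc 1 j, r ^ (j - l) * (a l ^ 2 / (ε + b l)) := by
          apply mul_le_mul_of_nonneg_left (Finset.sum_le_sum h3)
          exact le_of_lt (div_pos one_pos (by linarith))
  have hswap : ∑ j ∈ Finset.Icc 1 n, ∑ l ∈ Finset.Icc 1 j, r ^ (j - l) * (a l ^ 2 / (ε + b l))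
      = ∑ l ∈ Finset.Icc 1 n, ∑ j ∈ Finset.Icc l n, r ^ (j - l) * (a l ^ 2 / (ε + b l)) := by
    apply Finset.sum_comm'
    intro x y
    simp only [Finset.mem_Icc]
    omega
  have hβ₁1' : 0 < 1 - β₁ := by linarith
  have hr1' : 0 < 1 - r := by linarith
  have hinner : ∀ l ∈ Finset.Icc 1 n,
      ∑ j ∈ Finset.Icc l n, r ^ (j - l) * (a l ^ 2 / (ε + b l))
        ≤ (1 / (1 - r)) * (a l ^ 2 / (ε + b l)) := by
    intro l _
    rw [← Finset.sum_mul]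
    exact mul_le_mul_of_nonneg_right (geom_Icc_le hr0 hr1 l n)
      (div_nonneg (sq_nonneg _) (hεb l).le)
  have hlogeq : Real.log (1 + b n / ε) = Real.log (ε + b n) - Real.log ε := by
    rw [← Real.log_div (hεb n).ne' hε.ne']
    congr 1
    field_simp
  calc ∑ j ∈ Finset.Icc 1 n, c j ^ 2 / (ε + b j)
      ≤ ∑ j ∈ Finset.Icc 1 n,
          (1 / (1 - β₁)) * ∑ l ∈ Finset.Icc 1 j, r ^ (j - l) * (a l ^ 2 / (ε + b l)) :=
        Finset.sum_le_sum hperj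
    _ = (1 / (1 - β₁)) *
          ∑ l ∈ Finset.Icc 1 n, ∑ j ∈ Finset.Icc l n, r ^ (j - l) * (a l ^ 2 / (ε + b l)) := by
        rw [← Finset.mul_sum, hswap]
    _ ≤ (1 / (1 - β₁)) *
          ∑ l ∈ Finset.Icc 1 n, (1 / (1 - r)) * (a l ^ 2 / (ε + b l)) := by
        apply mul_le_mul_of_nonneg_left (Finset.sum_le_sum hinner)
        exact le_of_lt (div_pos one_pos hβ₁1')
    _ = (1 / (1 - β₁)) * (1 / (1 - r)) * ∑ l ∈ Finset.Icc 1 n, a l ^ 2 / (ε + b l) := by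
        rw [← Finset.mul_sum]; ring
    _ ≤ (1 / (1 - β₁)) * (1 / (1 - r)) *
          (Real.log (ε + b n) - Real.log ε - n * Real.log β₂) := by
        apply mul_le_mul_of_nonneg_left (hbase n)
        exact mul_nonneg (le_of_lt (div_pos one_pos hβ₁1')) (le_of_lt (div_pos one_pos hr1'))
    _ = 1 / ((1 - β₁) * (1 - r)) * (Real.log (1 + b n / ε) - n * Real.log β₂) := by
        rw [hlogeq, div_mul_div_comm]
        ring
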